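/- Let α > 0 and let y₁, y₂ ∈ ℕ with y₁ ≤ α < y₂. Then -y₁y₂ + α(y₁+y₂) - α² ≥ d(1-d), where d = α - ⌊α⌋. That is, among all two-point distributions on non-negative integers with mean α, the variance is minimized when y₁ = ⌊α⌋ and y₂ = ⌊α⌋ + 1, and the minimum variance equals d(1-d). -/

import Mathlib

/-- Among all two-point distributions on {y₁, y₂} ⊆ ℕ with mean α (y₁ ≤ α < y₂),
the variance -y₁y₂ + α(y₁+y₂) - α² is at least d(1-d) where d = α - ⌊α⌋,
with the minimum attained at y₁ = ⌊α⌋, y₂ = ⌊α⌋ + 1. -/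
theorem two_point_variance_ge (α : ℝ) (hα : 0 < α) (y₁ y₂ : ℕ)
    (h1 : (y₁ : ℝ) ≤ α) (h2 : α < (y₂ : ℝ)) :
    Int.fract α * (1 - Int.fract α)
      ≤ -(y₁ : ℝ) * (y₂ : ℝ) + α * ((y₁ : ℝ) + (y₂ : ℝ)) - α ^ 2 := by
  have hfl1 : (y₁ : ℤ) ≤ ⌊α⌋ := Int.le_floor.mpr (by exact_mod_cast h1)
  have hfl2 : ⌊α⌋ + 1 ≤ (y₂ : ℤ) := by
    have := Int.floor_le_floor (R := ℝ) h2.le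
    rw [Int.floor_natCast] at this
    rcases lt_or_eq_of_le this with h | h
    · omega
    · exfalso
      have : (y₂ : ℝ) ≤ α := by
        have := Int.floor_le α
        rw [h] at this; exact_mod_cast this
      linarith
  have hy1 : (y₁ : ℝ) ≤ ⌊α⌋ := by exact_mod_cast hfl1
  have hy2 : (⌊α⌋ : ℝ) + 1 ≤ (y₂ : ℝ) := by exact_mod_cast hfl2
  have hd : 0 ≤ Int.fract α := Int.fract_nonneg α
  have hd1 : 0 ≤ 1 - Int.fract α := by linarith [Int.fract_lt_one α]
  have key : Int.fract α * (1 - Int.fract α) ≤ (α - y₁) * (y₂ - α) := by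
    apply mul_le_mul
    · rw [Int.fract]; linarith
    · rw [Int.fract]; linarith
    · exact hd1
    · rw [Int.fract] at hd; linarith
  nlinarith [key]
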